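/- arXiv:1307.3817 — 3 statements merged into one kernel-verified Lean document; each statement's English description precedes it below -/
import Mathlib

section
/- Let (X,f) be a topological dynamical system. If (X,f) is multi-transitive, then (X,f) is strongly scattering, i.e., weakly disjoint from every E-system. -/
open Function Set Filter Topology MeasureTheory

/-- A topological dynamical system `f : X → X` is (topologically) transitive if for every
two non-empty open subsets `U`, `V` there exists `n ≥ 1` with `f^[n] '' U ∩ V ≠ ∅`. -/
def IsTopTransitive {X : Type*} [TopologicalSpace X] (f : X → X) : Prop :=
  ∀ U V : Set X, IsOpen U → IsOpen V → U.Nonempty → V.Nonempty →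
    ∃ n : ℕ, 1 ≤ n ∧ (f^[n] '' U ∩ V).Nonempty

/-- Multi-transitivity with respect to a vector `a = (a₁, …, a_r)`: the product system
`(X^r, f^{a₁} × ⋯ × f^{a_r})` is transitive. -/
def MultiTransWrt {X : Type*} [TopologicalSpace X] (f : X → X) {r : ℕ} (a : Fin r → ℕ) : Prop :=
  IsTopTransitive (fun x : Fin r → X => fun i => f^[a i] (x i))

/-- `(X, f)` is multi-transitive if it is multi-transitive with respect to `(1, 2, …, n)`
for every `n ≥ 1`. -/
def MultiTrans {X : Type*} [TopologicalSpace X] (f : X → X) : Prop :=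
  ∀ n : ℕ, 1 ≤ n → MultiTransWrt f (fun i : Fin n => (i : ℕ) + 1)

/-- `(X, f)` is strongly multi-transitive if it is multi-transitive with respect to every
vector of positive integers. -/
def StrongMultiTrans {X : Type*} [TopologicalSpace X] (f : X → X) : Prop :=
  ∀ r : ℕ, 1 ≤ r → ∀ a : Fin r → ℕ, (∀ i, 1 ≤ a i) → MultiTransWrt f a

/-- The hitting time set `N(U, V) = {n ≥ 1 : f^[n] '' U ∩ V ≠ ∅}`. -/
def HittingTimes {X : Type*} [TopologicalSpace X] (f : X → X) (U V : Set X) : Set ℕ :=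
  {n : ℕ | 1 ≤ n ∧ (f^[n] '' U ∩ V).Nonempty}
/-- iterate of the product-on-Fin map -/
lemma iter_pi {X : Type*} (f : X → X) {r : ℕ} (a : Fin r → ℕ) (n : ℕ) (x : Fin r → X) :
    (fun x : Fin r → X => fun i => f^[a i] (x i))^[n] x = fun i => f^[a i * n] (x i) := by
  induction n generalizing x with
  | zero => simp
  | succ n ih =>
    rw [Function.iterate_succ_apply, ih]
    funext i
    rw [Nat.mul_succ, Function.iterate_add_apply]

lemma preimage_iter_nonempty {X : Type*} [TopologicalSpace X] {f : X → X}
    (hf : Continuous f) (ht : IsTopTransitive f) {V : Set X} (hV : IsOpen V)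
    (hVne : V.Nonempty) (k : ℕ) : ((f^[k]) ⁻¹' V).Nonempty := by
  have key : ∀ k : ℕ, ∃ m, k ≤ m ∧ ((f^[m]) ⁻¹' V).Nonempty := by
    intro k
    induction k with
    | zero => exact ⟨0, le_rfl, by simpa using hVne⟩
    | succ k ih =>
      obtain ⟨m, hm, hne⟩ := ih
      have hVm : IsOpen ((f^[m]) ⁻¹' V) := (hf.iterate m).isOpen_preimage _ hV
      obtain ⟨n, hn1, y, ⟨x, hx, rfl⟩, hy⟩ := ht _ _ hVm hVm hne hne
      refine ⟨m + n, by omega, x, ?_⟩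
      show f^[m + n] x ∈ V
      rw [Function.iterate_add_apply]
      exact hy
  obtain ⟨m, hm, x, hx⟩ := key k
  refine ⟨f^[m - k] x, ?_⟩
  show f^[k] (f^[m - k] x) ∈ V
  rw [← Function.iterate_add_apply, Nat.add_sub_cancel' hm]
  exact hx

lemma iter_measure_inv {Y : Type*} [MeasurableSpace Y] {g : Y → Y} (hg : Measurable g)
    {μ : Measure Y} (hinv : ∀ s : Set Y, MeasurableSet s → μ (g ⁻¹' s) = μ s)
    (m : ℕ) {s : Set Y} (hs : MeasurableSet s) : μ ((g^[m]) ⁻¹' s) = μ s := by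
  induction m with
  | zero => simp
  | succ m ih =>
    rw [Function.iterate_succ, Set.preimage_comp, hinv _ ((hg.iterate m) hs)]
    exact ih

theorem multiTrans_stronglyScattering
    {X : Type*} [MetricSpace X] [CompactSpace X] (f : X → X) (hf : Continuous f)
    (hmt : MultiTrans f) :
    ∀ (Y : Type*) [MetricSpace Y] [CompactSpace Y] [MeasurableSpace Y] [BorelSpace Y]
      (g : Y → Y), Continuous g → IsTopTransitive g →
      (∃ μ : Measure Y, IsProbabilityMeasure μ ∧
        (∀ s : Set Y, MeasurableSet s → μ (g ⁻¹' s) = μ s) ∧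
        (∀ W : Set Y, IsOpen W → W.Nonempty → 0 < μ W)) →
      IsTopTransitive (fun p : X × Y => (f p.1, g p.2)) := by
  intro Y _ _ _ _ g hg hgt ⟨μ, hprob, hinv, hfull⟩
  -- f is topologically transitive
  have hftrans : IsTopTransitive f := by
    intro U V hU hV hUne hVne
    obtain ⟨u, hu⟩ := hUne
    have h1 := hmt 1 le_rfl
    obtain ⟨n, hn1, z, ⟨x, hx, rfl⟩, hz⟩ :=
      h1 {y : Fin 1 → X | y 0 ∈ U} {y : Fin 1 → X | y 0 ∈ V}
        (hU.preimage (continuous_apply 0)) (hV.preimage (continuous_apply 0))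
        ⟨fun _ => u, hu⟩ ⟨fun _ => hVne.choose, hVne.choose_spec⟩
    refine ⟨n, hn1, f^[n] (x 0), ⟨x 0, hx, rfl⟩, ?_⟩
    have := hz
    rw [iter_pi] at this
    simpa using this
  intro S T hS hT hSne hTne
  -- extract open boxes
  obtain ⟨⟨xs, ys⟩, hst⟩ := hSne
  obtain ⟨⟨xt, yt⟩, htt⟩ := hTne
  obtain ⟨U, W1, hU, hW1, hxU, hyW1, hUW1⟩ := isOpen_prod_iff.1 hS xs ys hst
  obtain ⟨V, W2, hV, hW2, hxV, hyW2, hVW2⟩ := isOpen_prod_iff.1 hT xt yt htt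
  have hUne : U.Nonempty := ⟨xs, hxU⟩
  have hW1ne : W1.Nonempty := ⟨ys, hyW1⟩
  have hVne : V.Nonempty := ⟨xt, hxV⟩
  have hW2ne : W2.Nonempty := ⟨yt, hyW2⟩
  -- transitivity of g : find k ≥ 1 with W := W1 ∩ g^[k]⁻¹ W2 nonempty open
  obtain ⟨k, hk1, w0, ⟨w1, hw1, rfl⟩, hw2⟩ := hgt W1 W2 hW1 hW2 hW1ne hW2ne
  set W : Set Y := W1 ∩ (g^[k]) ⁻¹' W2 with hWdef
  have hWopen : IsOpen W := hW1.inter (((hg.iterate k)).isOpen_preimage _ hW2)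
  have hWne : W.Nonempty := ⟨w1, hw1, hw2⟩
  have hWpos : 0 < μ W := hfull W hWopen hWne
  have hWmeas : MeasurableSet W := hWopen.measurableSet
  -- choose R with 1 < R * μ W
  have hWle : μ W ≤ 1 := prob_le_one
  have hWne0 : μ W ≠ 0 := hWpos.ne'
  have hWnetop : μ W ≠ ⊤ := (hWle.trans_lt ENNReal.one_lt_top).ne
  obtain ⟨r, hr⟩ := ENNReal.exists_nat_gt (r := (μ W)⁻¹) (by simp [hWne0])
  set R : ℕ := r + 1 with hRdef
  have hR1 : 1 ≤ R := by omega
  have hRmul : (1 : ENNReal) < R * μ W := by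
    have h1 : (μ W)⁻¹ * μ W < (R : ENNReal) * μ W := by
      rw [ENNReal.mul_lt_mul_iff_left hWne0 hWnetop]
      exact lt_of_lt_of_le hr (by rw [hRdef]; exact_mod_cast Nat.le_succ r)
    rwa [ENNReal.inv_mul_cancel hWne0 hWnetop] at h1
  -- preimage of V under f^[k] is nonempty
  have hV'ne : ((f^[k]) ⁻¹' V).Nonempty := preimage_iter_nonempty hf hftrans hV hVne k
  have hV'open : IsOpen ((f^[k]) ⁻¹' V) := (hf.iterate k).isOpen_preimage _ hV
  -- multi-transitivity with vector (1, ..., R)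
  obtain ⟨u0, hu0⟩ := hUne
  obtain ⟨v0, hv0⟩ := hV'ne
  obtain ⟨n, hn1, z, ⟨x, hx, rfl⟩, hz⟩ :=
    hmt R hR1 {y : Fin R → X | ∀ i, y i ∈ U} {y : Fin R → X | ∀ i, y i ∈ (f^[k]) ⁻¹' V}
      (by
        have : {y : Fin R → X | ∀ i, y i ∈ U} = Set.pi univ (fun _ => U) := by
          ext y; simp [Set.mem_pi]
        rw [this]
        exact isOpen_set_pi finite_univ (fun i _ => hU))
      (by
        have : {y : Fin R → X | ∀ i, y i ∈ (f^[k]) ⁻¹' V} =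
            Set.pi univ (fun _ => (f^[k]) ⁻¹' V) := by
          ext y; simp [Set.mem_pi]
        rw [this]
        exact isOpen_set_pi finite_univ (fun i _ => hV'open))
      ⟨fun _ => u0, fun _ => hu0⟩ ⟨fun _ => v0, fun _ => hv0⟩
  rw [iter_pi] at hz
  -- f-side hitting times: for each i : Fin R, ((i+1)*n + k) ∈ N_f(U,V)
  have hfside : ∀ i : Fin R, ∃ u ∈ U, f^[((i : ℕ) + 1) * n + k] u ∈ V := by
    intro i
    refine ⟨x i, hx i, ?_⟩
    have h2 : f^[((i : ℕ) + 1) * n] (x i) ∈ (f^[k]) ⁻¹' V := hz i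
    rw [add_comm, Function.iterate_add_apply]
    exact h2
  -- g-side: pigeonhole with the invariant measure
  have hAmeas : ∀ j : Fin (R + 1), NullMeasurableSet ((g^[(j : ℕ) * n]) ⁻¹' W) μ :=
    fun j => (hWmeas.preimage ((hg.measurable.iterate _))).nullMeasurableSet
  have hsum : μ (univ : Set Y) < ∑ j : Fin (R + 1), μ ((g^[(j : ℕ) * n]) ⁻¹' W) := by
    have heach : ∀ j : Fin (R + 1), μ ((g^[(j : ℕ) * n]) ⁻¹' W) = μ W :=
      fun j => iter_measure_inv hg.measurable hinv _ hWmeas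
    rw [measure_univ]
    calc (1 : ENNReal) < R * μ W := hRmul
      _ ≤ (R + 1 : ℕ) * μ W := by
          gcongr
          exact_mod_cast Nat.le_succ R
      _ = ∑ j : Fin (R + 1), μ ((g^[(j : ℕ) * n]) ⁻¹' W) := by
          simp [heach, Finset.sum_const, nsmul_eq_mul]
  obtain ⟨i, -, j, -, hij, y0, hyi, hyj⟩ :=
    exists_nonempty_inter_of_measure_univ_lt_sum_measure μ (fun j _ => hAmeas j) hsum
  -- WLOG i < j
  wlog hlt : (i : ℕ) < (j : ℕ) generalizing i j
  · have hne : (i : ℕ) ≠ (j : ℕ) := fun h => hij (Fin.ext h)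
    exact this j i hij.symm hyj hyi (by omega)
  -- build the common hitting time m = (j - i) * n + k
  set d : ℕ := ((j : ℕ) - (i : ℕ)) * n with hddef
  have hjR : (j : ℕ) ≤ R := by have := j.isLt; omega
  set t : Fin R := ⟨(j : ℕ) - (i : ℕ) - 1, by have := j.isLt; omega⟩ with htdef
  have ht1 : ((t : ℕ) + 1) = (j : ℕ) - (i : ℕ) := by
    show ((j : ℕ) - (i : ℕ) - 1) + 1 = (j : ℕ) - (i : ℕ); omega
  obtain ⟨u, huU, huV⟩ := hfside t
  rw [ht1] at huV
  -- g-side point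
  set y : Y := g^[(i : ℕ) * n] y0 with hydef
  have hyW : y ∈ W := hyi
  have hdy : g^[d] y ∈ W := by
    have hadd : d + (i : ℕ) * n = (j : ℕ) * n := by
      rw [hddef, ← Nat.add_mul, Nat.sub_add_cancel hlt.le]
    have : g^[d + (i : ℕ) * n] y0 = g^[d] y := Function.iterate_add_apply g d _ y0
    rw [hadd] at this
    rw [← this]
    exact hyj
  refine ⟨d + k, by omega, ((fun p : X × Y => (f p.1, g p.2))^[d + k] (u, y)), ⟨(u, y), ?_, rfl⟩, ?_⟩
  · exact hUW1 ⟨huU, hyW.1⟩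
  · have hPM : (fun p : X × Y => (f p.1, g p.2)) = Prod.map f g := rfl
    rw [hPM, Prod.map_iterate]
    refine hVW2 ⟨?_, ?_⟩
    · exact huV
    · show g^[d + k] y ∈ W2
      rw [add_comm, Function.iterate_add_apply]
      exact hdy.2
end

section
/- Let (X,f) be a topological dynamical system with X infinite. If (X,f) is multi-transitive with respect to the vector (1,2), i.e., the system (X×X, f×f²) is transitive, then (X,f) has sensitive dependence on initial conditions. -/
open Function Set Filter Topology MeasureTheory

private lemma onetwo_aux {X : Type*} [MetricSpace X] (f : X → X)
    (h : IsTopTransitive (fun p : X × X => (f p.1, f^[2] p.2)))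
    (δ ε : ℝ) (hδ : 0 < δ) (hε : 0 < ε) (hεδ : ε ≤ δ) (x t : X)
    (S : ∀ y, dist x y < ε → ∀ n, 1 ≤ n → dist (f^[n] x) (f^[n] y) ≤ δ) :
    dist x t < 6 * δ := by
  have hiter : ∀ n (a b : X), (fun p : X × X => (f p.1, f^[2] p.2))^[n] (a, b)
      = (f^[n] a, f^[2*n] b) := by
    intro n
    induction n with
    | zero => intro a b; simp
    | succ k ih =>
      intro a b
      rw [Function.iterate_succ_apply, ih (f a) (f^[2] b)]
      rw [← Function.iterate_succ_apply, ← Function.iterate_add_apply]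
      have h2 : 2 * k + 2 = 2 * (k + 1) := by ring
      rw [h2]
  obtain ⟨n, hn1, hne⟩ := h (Metric.ball x ε ×ˢ Metric.ball x ε)
      (Metric.ball x ε ×ˢ Metric.ball t δ)
      (Metric.isOpen_ball.prod Metric.isOpen_ball)
      (Metric.isOpen_ball.prod Metric.isOpen_ball)
      ⟨(x, x), by simp [hε]⟩ ⟨(x, t), by simp [hε, hδ]⟩
  obtain ⟨z, ⟨w, hw, hz⟩, hzV⟩ := hne
  obtain ⟨u, v⟩ := w
  rw [hiter n u v] at hz
  subst hz
  have hu : dist x u < ε := by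
    have := hw.1; rw [Metric.mem_ball, dist_comm] at this; exact this
  have hv : dist x v < ε := by
    have := hw.2; rw [Metric.mem_ball, dist_comm] at this; exact this
  have hfu : dist x (f^[n] u) < ε := by
    have := hzV.1; rw [Metric.mem_ball, dist_comm] at this; exact this
  have hfv : dist (f^[2*n] v) t < δ := hzV.2
  have h2n : 1 ≤ 2 * n := by omega
  -- dist (f^[n] x) (f^[n] u) ≤ δ
  have b1 : dist (f^[n] x) (f^[n] u) ≤ δ := S u hu n hn1
  -- dist (f^[n] x) (f^[2n] u) ≤ δ since f^[2n] u = f^[n] (f^[n] u)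
  have b2 : dist (f^[n] x) (f^[2*n] u) ≤ δ := by
    have : f^[2*n] u = f^[n] (f^[n] u) := by
      rw [← Function.iterate_add_apply]; congr 1; ring
    rw [this]
    exact S (f^[n] u) hfu n hn1
  -- dist (f^[2n] u) (f^[2n] v) ≤ 2δ
  have b3 : dist (f^[2*n] u) (f^[2*n] v) ≤ 2 * δ := by
    have h1 := S u hu (2*n) h2n
    have h2 := S v hv (2*n) h2n
    calc dist (f^[2*n] u) (f^[2*n] v)
        ≤ dist (f^[2*n] u) (f^[2*n] x) + dist (f^[2*n] x) (f^[2*n] v) := dist_triangle _ _ _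
      _ ≤ 2 * δ := by rw [dist_comm (f^[2*n] u)] at *; linarith
  -- dist x (f^[n] x) ≤ ε + δ
  have b4 : dist x (f^[n] x) ≤ ε + δ := by
    calc dist x (f^[n] x) ≤ dist x (f^[n] u) + dist (f^[n] u) (f^[n] x) := dist_triangle _ _ _
      _ ≤ ε + δ := by rw [dist_comm (f^[n] u)]; linarith
  calc dist x t ≤ dist x (f^[n] x) + dist (f^[n] x) t := dist_triangle _ _ _
    _ ≤ dist x (f^[n] x) + (dist (f^[n] x) (f^[2*n] u) + dist (f^[2*n] u) (f^[2*n] v)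
        + dist (f^[2*n] v) t) := by
          have := dist_triangle4 (f^[n] x) (f^[2*n] u) (f^[2*n] v) t
          linarith
    _ < 6 * δ := by linarith

theorem onetwo_trans_sensitive
    {X : Type*} [MetricSpace X] [CompactSpace X] [Infinite X]
    (f : X → X) (hf : Continuous f)
    (h : IsTopTransitive (fun p : X × X => (f p.1, f^[2] p.2))) :
    ∃ δ : ℝ, 0 < δ ∧ ∀ x : X, ∀ ε : ℝ, 0 < ε →
      ∃ y : X, dist x y < ε ∧ ∃ n : ℕ, 1 ≤ n ∧ δ < dist (f^[n] x) (f^[n] y) := by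
  obtain ⟨p, q, hpq⟩ := exists_pair_ne X
  have hd : 0 < dist p q := dist_pos.mpr hpq
  refine ⟨dist p q / 12, by linarith, fun x ε hε => ?_⟩
  set δ := dist p q / 12 with hδdef
  have hδ : 0 < δ := by positivity
  by_contra hcon
  push_neg at hcon
  set ε' := min ε δ with hε'def
  have hε' : 0 < ε' := lt_min hε hδ
  have hε'δ : ε' ≤ δ := min_le_right _ _
  have S : ∀ y, dist x y < ε' → ∀ n, 1 ≤ n → dist (f^[n] x) (f^[n] y) ≤ δ := by
    intro y hy n hn
    exact hcon y (lt_of_lt_of_le hy (min_le_left _ _)) n hn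
  have hp := onetwo_aux f h δ ε' hδ hε' hε'δ x p S
  have hq := onetwo_aux f h δ ε' hδ hε' hε'δ x q S
  have : dist p q ≤ dist p x + dist x q := dist_triangle _ _ _
  rw [dist_comm p x] at this
  linarith
end

section
/- Let (X,f) be a topological dynamical system with X having at least two points. If (X,f) is multi-transitive, then there exist δ > 0 and a dense Mycielski subset C of X (a countable union of Cantor sets) such that C is δ-scrambled: every pair of distinct points x, y ∈ C satisfies limsup_{n→∞} d(f^n(x), f^n(y)) > δ and liminf_{n→∞} d(f^n(x), f^n(y)) = 0. -/
open Function Set Filter Topology MeasureTheory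

/-- A Cantor set is a subset homeomorphic to the Cantor space. -/
def IsCantorSet {X : Type*} [TopologicalSpace X] (s : Set X) : Prop :=
  Nonempty ((ℕ → Bool) ≃ₜ s)


/-! ### Auxiliary lemmas -/

section Aux

variable {Y : Type*} [TopologicalSpace Y]

/-- In any transitive system the hitting times of two nonempty open sets are unbounded. -/
lemma IsTopTransitive.hit_ge {g : Y → Y} (hg : Continuous g) (ht : IsTopTransitive g) :
    ∀ A B : Set Y, IsOpen A → IsOpen B → A.Nonempty → B.Nonempty →
      ∀ k : ℕ, ∃ n, k ≤ n ∧ 1 ≤ n ∧ (g^[n] '' A ∩ B).Nonempty := by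
  intro A B hA hB hAne hBne k
  induction k with
  | zero =>
    obtain ⟨n, hn1, hn⟩ := ht A B hA hB hAne hBne
    exact ⟨n, Nat.zero_le _, hn1, hn⟩
  | succ k ih =>
    obtain ⟨n, hkn, hn1, hn⟩ := ih
    -- A' = A ∩ g^[n] ⁻¹' B is open and nonempty
    obtain ⟨z, ⟨x, hxA, hxz⟩, hzB⟩ := hn
    have hA' : IsOpen (A ∩ g^[n] ⁻¹' B) := hA.inter ((hg.iterate n).isOpen_preimage B hB)
    have hA'ne : (A ∩ g^[n] ⁻¹' B).Nonempty := ⟨x, hxA, by simp [hxz, hzB]⟩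
    obtain ⟨s, hs1, hs⟩ := ht _ _ hA' hA' hA'ne hA'ne
    obtain ⟨w, ⟨y, ⟨hyA, hyB⟩, hyw⟩, hwA, hwB⟩ := hs
    refine ⟨n + s, by omega, by omega, ⟨g^[n + s] y, ⟨y, hyA, rfl⟩, ?_⟩⟩
    have : g^[n + s] y = g^[n] (g^[s] y) := Function.iterate_add_apply g n s y
    rw [this, hyw]
    exact hwB

end Aux

section Dyn

variable {X : Type*} [MetricSpace X] [CompactSpace X] [Nontrivial X]
variable {f : X → X}

private lemma multi_map_continuous (hf : Continuous f) {r : ℕ} (a : Fin r → ℕ) :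
    Continuous (fun x : Fin r → X => fun i => f^[a i] (x i)) :=
  continuous_pi fun i => (hf.iterate (a i)).comp (continuous_apply i)

private lemma multi_map_iterate {r : ℕ} (a : Fin r → ℕ) (m : ℕ) (x : Fin r → X) :
    (fun x : Fin r → X => fun i => f^[a i] (x i))^[m] x = fun i => f^[a i * m] (x i) := by
  induction m with
  | zero => simp
  | succ m ih =>
    rw [Function.iterate_succ_apply', ih]
    funext i
    simp only []
    rw [← Function.iterate_add_apply]
    congr 1
    ring

/-- Main extraction from multi-transitivity: simultaneous hits with rates 1,…,r and a lower
bound on the common parameter `m`. -/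
lemma multi_hit (hf : Continuous f) (hmt : MultiTrans f) {r : ℕ} (hr : 1 ≤ r)
    (U V : Fin r → Set X) (hU : ∀ i, IsOpen (U i)) (hV : ∀ i, IsOpen (V i))
    (hUne : ∀ i, (U i).Nonempty) (hVne : ∀ i, (V i).Nonempty) (k : ℕ) :
    ∃ m, k ≤ m ∧ 1 ≤ m ∧ ∀ i : Fin r, (f^[((i : ℕ) + 1) * m] '' U i ∩ V i).Nonempty := by
  have htrans := hmt r hr
  have hcont := multi_map_continuous hf (fun i : Fin r => (i : ℕ) + 1)
  have hA : IsOpen (Set.pi Set.univ U) := isOpen_set_pi Set.finite_univ (fun i _ => hU i)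
  have hB : IsOpen (Set.pi Set.univ V) := isOpen_set_pi Set.finite_univ (fun i _ => hV i)
  have hAne : (Set.pi Set.univ U).Nonempty :=
    ⟨fun i => (hUne i).some, by simp only [Set.mem_univ_pi]; exact fun i => (hUne i).some_mem⟩
  have hBne : (Set.pi Set.univ V).Nonempty :=
    ⟨fun i => (hVne i).some, by simp only [Set.mem_univ_pi]; exact fun i => (hVne i).some_mem⟩
  obtain ⟨m, hkm, hm1, hit⟩ := htrans.hit_ge hcont _ _ hA hB hAne hBne k
  refine ⟨m, hkm, hm1, fun i => ?_⟩
  obtain ⟨z, ⟨ξ, hξA, hξz⟩, hzB⟩ := hit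
  have hcomp : z i = f^[((i : ℕ) + 1) * m] (ξ i) := by
    rw [← hξz, multi_map_iterate]
  exact ⟨z i, ⟨ξ i, by exact (Set.mem_univ_pi.mp hξA) i, hcomp.symm⟩,
    (Set.mem_univ_pi.mp hzB) i⟩

/-- Plain transitivity of `f` itself with unbounded times. -/
lemma single_hit (hf : Continuous f) (hmt : MultiTrans f)
    (U V : Set X) (hU : IsOpen U) (hV : IsOpen V) (hUne : U.Nonempty) (hVne : V.Nonempty)
    (k : ℕ) : ∃ n, k ≤ n ∧ 1 ≤ n ∧ (f^[n] '' U ∩ V).Nonempty := by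
  obtain ⟨m, hkm, hm1, hit⟩ := multi_hit hf hmt (le_refl 1)
    (fun _ => U) (fun _ => V) (fun _ => hU) (fun _ => hV) (fun _ => hUne) (fun _ => hVne) k
  refine ⟨m, hkm, hm1, ?_⟩
  have := hit 0
  simpa using this

end Dyn
section Dyn2

variable {X : Type*} [MetricSpace X] [CompactSpace X] [Nontrivial X]
variable {f : X → X}

lemma surj_of_multiTrans (hf : Continuous f) (hmt : MultiTrans f) :
    Function.Surjective f := by
  intro y
  by_contra hy
  push_neg at hy
  have hcl : IsClosed (Set.range f) := (isCompact_range hf).isClosed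
  have hV : IsOpen ((Set.range f)ᶜ) := hcl.isOpen_compl
  have hyV : y ∈ (Set.range f)ᶜ := by
    simp only [Set.mem_compl_iff, Set.mem_range, not_exists]
    exact fun x h => hy x h
  obtain ⟨n, _, hn1, hit⟩ := single_hit hf hmt Set.univ ((Set.range f)ᶜ) isOpen_univ hV
    ⟨y, trivial⟩ ⟨y, hyV⟩ 0
  obtain ⟨z, ⟨x, _, hxz⟩, hz⟩ := hit
  apply hz
  rcases Nat.exists_eq_add_of_le hn1 with ⟨j, hj⟩
  have hj' : n = j + 1 := by omega
  have : z = f (f^[j] x) := by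
    rw [← hxz, hj', Function.iterate_succ_apply']
  exact ⟨f^[j] x, this.symm⟩

/-- Every nonempty open set contains two distinct points. -/
lemma open_pair_ne (hf : Continuous f) (hmt : MultiTrans f) :
    ∀ U : Set X, IsOpen U → U.Nonempty → ∃ a ∈ U, ∃ b ∈ U, a ≠ b := by
  intro U hUo hUne
  by_contra hsub
  push_neg at hsub
  have hsing : ∃ x, U = {x} := by
    rw [Set.exists_eq_singleton_iff_nonempty_subsingleton]
    exact ⟨hUne, fun a ha b hb => by
      by_contra hne
      exact hne (hsub a ha b hb)⟩
  obtain ⟨x, rfl⟩ := hsing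
  -- x is periodic
  obtain ⟨p, _, hp1, hphit⟩ := single_hit hf hmt {x} {x} hUo hUo ⟨x, rfl⟩ ⟨x, rfl⟩ 0
  obtain ⟨z, ⟨w, hw, hwz⟩, hz⟩ := hphit
  rw [Set.mem_singleton_iff] at hw hz
  have hper : f^[p] x = x := by rw [← hw, hwz, hz, hw]
  -- f x ≠ x
  have hfx : f x ≠ x := by
    intro hfix
    have hiter : ∀ n, f^[n] x = x := by
      intro n; induction n with
      | zero => rfl
      | succ n ih => rw [Function.iterate_succ_apply', ih, hfix]
    -- then every nonempty open set contains x, so X = {x}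
    obtain ⟨y, hy⟩ := exists_ne x
    have : ∀ V : Set X, IsOpen V → V.Nonempty → x ∈ V := by
      intro V hVo hVne
      obtain ⟨n, _, _, hhit⟩ := single_hit hf hmt {x} V hUo hVo ⟨x, rfl⟩ hVne 0
      obtain ⟨z2, ⟨w2, hw2, hwz2⟩, hz2⟩ := hhit
      rw [Set.mem_singleton_iff] at hw2
      rw [hw2, hiter n] at hwz2
      rw [hwz2]; exact hz2
    -- y has a neighborhood avoiding x
    have hyo : IsOpen ({x}ᶜ : Set X) := isOpen_compl_singleton
    have := this {x}ᶜ hyo ⟨y, hy⟩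
    exact this rfl
  -- X is finite: it equals the (finite) orbit of x
  have hcycle : ∀ q r, f^[r + p * q] x = f^[r] x := by
    intro q
    induction q with
    | zero => simp
    | succ q ih =>
      intro r
      have : r + p * (q + 1) = (r + p * q) + p := by ring
      rw [this, Function.iterate_add_apply, hper, ih r]
  have horb : ∀ n, f^[n] x = f^[n % p] x := by
    intro n
    conv_lhs => rw [← Nat.mod_add_div n p]
    exact hcycle (n / p) (n % p)
  set O : Set X := Set.range (fun i : Fin p => f^[(i : ℕ)] x) with hO
  have hOfin : O.Finite := Set.finite_range _
  have hOdense : Dense O := by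
    rw [dense_iff_inter_open]
    intro V hVo hVne
    obtain ⟨n, _, _, hhit⟩ := single_hit hf hmt {x} V hUo hVo ⟨x, rfl⟩ hVne 0
    obtain ⟨z2, ⟨w2, hw2, hwz2⟩, hz2⟩ := hhit
    rw [Set.mem_singleton_iff] at hw2
    rw [hw2, horb n] at hwz2
    refine ⟨z2, hz2, ⟨⟨n % p, Nat.mod_lt n (by omega)⟩, hwz2⟩⟩
  have hXO : (Set.univ : Set X) = O := by
    have h1 : closure O = O := hOfin.isClosed.closure_eq
    have h2 : closure O = Set.univ := hOdense.closure_eq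
    rw [← h1, h2]
  have hXfin : Finite X := by
    rw [← Set.finite_univ_iff]
    rw [hXO]
    exact hOfin
  have hsing_open : ∀ z : X, IsOpen ({z} : Set X) := by
    intro z
    rw [← isClosed_compl_iff]
    exact (Set.toFinite _).isClosed
  -- contradiction with level-2 multi-transitivity
  obtain ⟨m, _, hm1, hit⟩ := multi_hit hf hmt (show 1 ≤ 2 by norm_num)
    (fun _ => {x}) (fun i => if (i : ℕ) = 0 then {x} else {f x})
    (fun _ => hsing_open x)
    (fun i => by skip; split <;> exact hsing_open _)
    (fun _ => ⟨x, rfl⟩)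
    (fun i => by skip
                 split
                 · exact ⟨x, rfl⟩
                 · exact ⟨f x, rfl⟩) 0
  have h0 := hit 0
  have h1 := hit 1
  simp only [Fin.isValue, Fin.val_zero, Fin.val_one] at h0 h1
  norm_num at h0 h1
  apply hfx
  have h2m : 2 * m = m + m := by ring
  rw [h1, h2m, Function.iterate_add_apply, ← h0, ← h0]
end Dyn2
section Dyn3

variable {X : Type*} [MetricSpace X] [CompactSpace X] [Nontrivial X]
variable {f : X → X}

/-- Density of proximal times: pairs from any two open sets come ε-close at arbitrarily
large common times. -/
lemma prox_dense (hf : Continuous f) (hmt : MultiTrans f)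
    (U V : Set X) (hU : IsOpen U) (hV : IsOpen V) (hUne : U.Nonempty) (hVne : V.Nonempty)
    (ε : ℝ) (hε : 0 < ε) (k : ℕ) :
    ∃ n, k ≤ n ∧ ∃ x ∈ U, ∃ y ∈ V, dist (f^[n] x) (f^[n] y) < ε := by
  have hε4 : 0 < ε / 4 := by linarith
  obtain ⟨T, -, hTfin, hTcov⟩ := finite_cover_balls_of_compact (isCompact_univ (X := X)) hε4
  classical
  set r : ℕ := hTfin.toFinset.card + 1 with hr
  have hr1 : 1 ≤ r := by omega
  obtain ⟨m, -, hm1, hit⟩ := multi_hit hf hmt hr1 (fun _ => U) (fun _ => V)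
    (fun _ => hU) (fun _ => hV) (fun _ => hUne) (fun _ => hVne) 0
  -- pigeonhole on the orbit points f^[i*m] w, i = 0..r
  obtain ⟨w⟩ : Nonempty X := inferInstance
  have hmem : ∀ i : Fin (r + 1), ∃ z ∈ hTfin.toFinset, dist (f^[(i : ℕ) * m] w) z < ε / 4 := by
    intro i
    have := hTcov (Set.mem_univ (f^[(i : ℕ) * m] w))
    simp only [Set.mem_iUnion, Metric.mem_ball] at this
    obtain ⟨z, hzT, hz⟩ := this
    exact ⟨z, hTfin.mem_toFinset.mpr hzT, hz⟩
  choose cf hcfT hcf using hmem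
  have hcard : Fintype.card {z // z ∈ hTfin.toFinset} < Fintype.card (Fin (r + 1)) := by
    simp [Fintype.card_coe]
    omega
  obtain ⟨i0, j0, hij, hcfeq⟩ := Fintype.exists_ne_map_eq_of_card_lt
    (fun i : Fin (r + 1) => (⟨cf i, hcfT i⟩ : {z // z ∈ hTfin.toFinset})) hcard
  have hcfeq' : cf i0 = cf j0 := congrArg Subtype.val hcfeq
  suffices H : ∀ i j : Fin (r + 1), (i : ℕ) < (j : ℕ) → cf i = cf j →
      ∃ n, k ≤ n ∧ ∃ x ∈ U, ∃ y ∈ V, dist (f^[n] x) (f^[n] y) < ε by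
    rcases lt_or_gt_of_ne hij with hlt | hlt
    · exact H i0 j0 hlt hcfeq'
    · exact H j0 i0 hlt hcfeq'.symm
  intro i j hlt hcfe
  set d : ℕ := (j : ℕ) - (i : ℕ) with hd
  have hd1 : 1 ≤ d := by omega
  have hdr : d ≤ r := by have := j.isLt; omega
  set c : ℕ := d * m with hc
  have hclose : dist (f^[(i : ℕ) * m] w) (f^[(j : ℕ) * m] w) < ε / 2 := by
    calc dist (f^[(i : ℕ) * m] w) (f^[(j : ℕ) * m] w)
        ≤ dist (f^[(i : ℕ) * m] w) (cf i) + dist (cf j) (f^[(j : ℕ) * m] w) := by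
          rw [hcfe]; exact dist_triangle _ _ _
      _ < ε / 4 + ε / 4 := by
          have h1 := hcf i
          have h2 := hcf j
          rw [dist_comm (cf j)] at *
          linarith
      _ = ε / 2 := by ring
  have hcomp : f^[c] (f^[(i : ℕ) * m] w) = f^[(j : ℕ) * m] w := by
    rw [← Function.iterate_add_apply]
    congr 1
    have : d + (i : ℕ) = (j : ℕ) := by omega
    calc c + (i : ℕ) * m = (d + (i : ℕ)) * m := by ring
      _ = (j : ℕ) * m := by rw [this]
  set E : Set X := {u | dist u (f^[c] u) < ε / 2} with hE
  have hEo : IsOpen E := isOpen_lt (continuous_id.dist (hf.iterate c)) continuous_const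
  have hEne : E.Nonempty := ⟨f^[(i : ℕ) * m] w, by simp only [hE, Set.mem_setOf_eq, hcomp]; exact hclose⟩
  -- c is a hitting time of (U, V)
  have hchit : ∃ x ∈ U, f^[c] x ∈ V := by
    have := hit ⟨d - 1, by omega⟩
    obtain ⟨z, ⟨x, hxU, hxz⟩, hzV⟩ := this
    refine ⟨x, hxU, ?_⟩
    have hdd : ((⟨d - 1, by omega⟩ : Fin r) : ℕ) + 1 = d := by simp; omega
    rw [hdd] at hxz
    rw [← hc] at hxz
    rw [hxz]
    exact hzV
  obtain ⟨x0, hx0U, hx0V⟩ := hchit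
  set G : Set X := U ∩ f^[c] ⁻¹' V with hG
  have hGo : IsOpen G := hU.inter ((hf.iterate c).isOpen_preimage V hV)
  have hGne : G.Nonempty := ⟨x0, hx0U, hx0V⟩
  obtain ⟨n, hkn, -, hnhit⟩ := single_hit hf hmt G E hGo hEo hGne hEne k
  obtain ⟨z, ⟨x, ⟨hxU, hxV⟩, hxz⟩, hzE⟩ := hnhit
  refine ⟨n, hkn, x, hxU, f^[c] x, hxV, ?_⟩
  have hsw : f^[n] (f^[c] x) = f^[c] (f^[n] x) := by
    rw [← Function.iterate_add_apply, ← Function.iterate_add_apply, Nat.add_comm]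
  rw [hsw]
  have : f^[n] x ∈ E := by rw [hxz]; exact hzE
  calc dist (f^[n] x) (f^[c] (f^[n] x)) < ε / 2 := this
    _ < ε := by linarith

end Dyn3
section Dyn4

variable {X : Type*} [MetricSpace X] [CompactSpace X] [Nontrivial X]
variable {f : X → X}

/-- Density of separated times: pairs from any two open sets get δ'-separated at arbitrarily
large common times, where δ' = dist p₀ q₀ / 8 for any two distinct points. -/
lemma far_dense (hf : Continuous f) (hmt : MultiTrans f)
    {p₀ q₀ : X} (hpq : p₀ ≠ q₀)
    (U V : Set X) (hU : IsOpen U) (hV : IsOpen V) (hUne : U.Nonempty) (hVne : V.Nonempty)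
    (k : ℕ) :
    ∃ n, k ≤ n ∧ ∃ x ∈ U, ∃ y ∈ V, dist p₀ q₀ / 8 < dist (f^[n] x) (f^[n] y) := by
  set D : ℝ := dist p₀ q₀ with hD
  have hD0 : 0 < D := dist_pos.mpr hpq
  set δ' : ℝ := D / 8 with hδ'
  by_contra hcon
  push_neg at hcon
  -- all images of U and V beyond time k are δ'-glued, hence 2δ'-small
  have hVne2 := hVne
  obtain ⟨y₀, hy₀⟩ := hVne2
  have hsmallU : ∀ n, k ≤ n → ∀ x ∈ U, ∀ x' ∈ U, dist (f^[n] x) (f^[n] x') ≤ 2 * δ' := by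
    intro n hn x hx x' hx'
    have h1 := hcon n hn x hx y₀ hy₀
    have h2 := hcon n hn x' hx' y₀ hy₀
    calc dist (f^[n] x) (f^[n] x')
        ≤ dist (f^[n] x) (f^[n] y₀) + dist (f^[n] y₀) (f^[n] x') := dist_triangle _ _ _
      _ ≤ δ' + δ' := by rw [dist_comm (f^[n] y₀)]; exact add_le_add h1 h2
      _ = 2 * δ' := by ring
  -- level-3 multi-transitivity
  have hWp : IsOpen (Metric.ball p₀ (D / 8)) := Metric.isOpen_ball
  have hWq : IsOpen (Metric.ball q₀ (D / 8)) := Metric.isOpen_ball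
  have hD8 : 0 < D / 8 := by linarith
  obtain ⟨m, hkm, hm1, hit⟩ := multi_hit hf hmt (show (1:ℕ) ≤ 3 by norm_num)
    (fun _ => U)
    (fun i => if (i : ℕ) = 0 then V else if (i : ℕ) = 1 then Metric.ball p₀ (D / 8)
      else Metric.ball q₀ (D / 8))
    (fun _ => hU)
    (fun i => by skip; split
                 · exact hV
                 · split <;> exact Metric.isOpen_ball)
    (fun _ => hUne)
    (fun i => by skip; split
                 · exact hVne
                 · split
                   · exact ⟨p₀, Metric.mem_ball_self hD8⟩
                   · exact ⟨q₀, Metric.mem_ball_self hD8⟩) k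
  have h0 := hit 0
  have h1 := hit 1
  have h2 := hit 2
  norm_num at h0 h1 h2
  obtain ⟨x₁, hx₁U, hx₁V⟩ := h0
  obtain ⟨x₂, hx₂U, hx₂p⟩ := h1
  obtain ⟨x₃, hx₃U, hx₃q⟩ := h2
  simp only [Set.mem_preimage] at hx₁V hx₂p hx₃q
  -- the point z := f^[2m] x₂ is moved far by f^[m]
  set z : X := f^[2 * m] x₂ with hz
  have hzp : dist z p₀ < D / 8 := Metric.mem_ball.mp hx₂p
  have hfmz : f^[m] z = f^[3 * m] x₂ := by
    rw [hz, ← Function.iterate_add_apply]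
    congr 1
    ring
  have h32 : dist (f^[3 * m] x₂) (f^[3 * m] x₃) ≤ 2 * δ' :=
    hsmallU (3 * m) (by omega) x₂ hx₂U x₃ hx₃U
  have hzq : dist (f^[m] z) q₀ ≤ 2 * δ' + D / 8 := by
    rw [hfmz]
    calc dist (f^[3 * m] x₂) q₀
        ≤ dist (f^[3 * m] x₂) (f^[3 * m] x₃) + dist (f^[3 * m] x₃) q₀ := dist_triangle _ _ _
      _ ≤ 2 * δ' + D / 8 := add_le_add h32 (le_of_lt (Metric.mem_ball.mp hx₃q))
  have hfar : δ' < dist z (f^[m] z) := by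
    have htri : D ≤ dist p₀ z + dist z (f^[m] z) + dist (f^[m] z) q₀ := by
      calc D = dist p₀ q₀ := rfl
        _ ≤ dist p₀ (f^[m] z) + dist (f^[m] z) q₀ := dist_triangle _ _ _
        _ ≤ (dist p₀ z + dist z (f^[m] z)) + dist (f^[m] z) q₀ :=
            add_le_add (dist_triangle _ _ _) le_rfl
    have hpz : dist p₀ z < D / 8 := by rw [dist_comm]; exact hzp
    have hδ'D : δ' = D / 8 := hδ'
    linarith
  set F : Set X := {u | δ' < dist u (f^[m] u)} with hF
  have hFo : IsOpen F := isOpen_lt continuous_const (continuous_id.dist (hf.iterate m))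
  have hFne : F.Nonempty := ⟨z, hfar⟩
  set G : Set X := U ∩ f^[m] ⁻¹' V with hG
  have hGo : IsOpen G := hU.inter ((hf.iterate _).isOpen_preimage V hV)
  have hGne : G.Nonempty := ⟨x₁, hx₁U, hx₁V⟩
  obtain ⟨n, hkn, -, hnhit⟩ := single_hit hf hmt G F hGo hFo hGne hFne k
  obtain ⟨zz, ⟨x, hxG, hxz⟩, hzF⟩ := hnhit
  obtain ⟨hxU, hxV⟩ := hxG
  have hsw : f^[n] (f^[m] x) = f^[m] (f^[n] x) := by
    rw [← Function.iterate_add_apply, ← Function.iterate_add_apply, Nat.add_comm]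
  have hfinal : δ' < dist (f^[n] x) (f^[n] (f^[m] x)) := by
    rw [hsw]
    have : f^[n] x ∈ F := by rw [hxz]; exact hzF
    exact this
  exact absurd hfinal (not_lt.mpr (hcon n hkn x hxU (f^[m] x) hxV))

end Dyn4
section Myc

variable {X : Type*} [MetricSpace X]

/-- A small ball with closure inside an open set, with a diameter bound. -/
lemma small_ball_in {W : Set X} (hW : IsOpen W) {a : X} (ha : a ∈ W) {η : ℝ} (hη : 0 < η) :
    ∃ V : Set X, IsOpen V ∧ V.Nonempty ∧ closure V ⊆ W ∧
      ∀ x ∈ closure V, ∀ y ∈ closure V, dist x y ≤ η := by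
  obtain ⟨ε, hε, hball⟩ := Metric.isOpen_iff.mp hW a ha
  set r : ℝ := min (ε / 2) (η / 2) with hr
  have hr0 : 0 < r := by
    apply lt_min <;> linarith
  refine ⟨Metric.ball a r, Metric.isOpen_ball, ⟨a, Metric.mem_ball_self hr0⟩, ?_, ?_⟩
  · intro x hx
    apply hball
    have : x ∈ Metric.closedBall a r := Metric.closure_ball_subset_closedBall hx
    have hd : dist x a ≤ r := Metric.mem_closedBall.mp this
    have : r < ε := by
      have : r ≤ ε / 2 := min_le_left _ _
      linarith
    exact Metric.mem_ball.mpr (by linarith)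
  · intro x hx y hy
    have hx' : dist x a ≤ r := Metric.mem_closedBall.mp (Metric.closure_ball_subset_closedBall hx)
    have hy' : dist y a ≤ r := Metric.mem_closedBall.mp (Metric.closure_ball_subset_closedBall hy)
    have hrη : r ≤ η / 2 := min_le_right _ _
    calc dist x y ≤ dist x a + dist a y := dist_triangle _ _ _
      _ = dist x a + dist y a := by rw [dist_comm a y]
      _ ≤ r + r := add_le_add hx' hy'
      _ ≤ η := by linarith

/-- Shrinking a pair of open sets into an open relation that meets all open boxes. -/
lemma shrink_one {O : Set (X × X)} (hOo : IsOpen O)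
    (hOd : ∀ U V : Set X, IsOpen U → IsOpen V → U.Nonempty → V.Nonempty →
      ∃ x ∈ U, ∃ y ∈ V, (x, y) ∈ O)
    (U V : Set X) (hU : IsOpen U) (hV : IsOpen V) (hUne : U.Nonempty) (hVne : V.Nonempty) :
    ∃ U' V' : Set X, IsOpen U' ∧ IsOpen V' ∧ U'.Nonempty ∧ V'.Nonempty ∧
      U' ⊆ U ∧ V' ⊆ V ∧ (∀ x ∈ closure U', ∀ y ∈ closure V', (x, y) ∈ O) := by
  obtain ⟨x, hxU, y, hyV, hxy⟩ := hOd U V hU hV hUne hVne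
  obtain ⟨P, Q, hPo, hQo, hxP, hyQ, hPQ⟩ := isOpen_prod_iff.mp hOo x y hxy
  obtain ⟨U', hU'o, hU'ne, hU'cl, -⟩ :=
    small_ball_in (hPo.inter hU) (⟨hxP, hxU⟩ : x ∈ P ∩ U) one_pos
  obtain ⟨V', hV'o, hV'ne, hV'cl, -⟩ :=
    small_ball_in (hQo.inter hV) (⟨hyQ, hyV⟩ : y ∈ Q ∩ V) one_pos
  refine ⟨U', V', hU'o, hV'o, hU'ne, hV'ne, ?_, ?_, ?_⟩
  · exact fun z hz => (hU'cl (subset_closure hz)).2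
  · exact fun z hz => (hV'cl (subset_closure hz)).2
  · intro a ha b hb
    exact hPQ ⟨(hU'cl ha).1, (hV'cl hb).1⟩

variable (R : ℕ → Set (X × X))

/-- Iterated shrinking into the first `t+1` relations. -/
lemma shrink_star (hRo : ∀ j, IsOpen (R j))
    (hRd : ∀ j, ∀ U V : Set X, IsOpen U → IsOpen V → U.Nonempty → V.Nonempty →
      ∃ x ∈ U, ∃ y ∈ V, (x, y) ∈ R j) (t : ℕ) :
    ∀ U V : Set X, IsOpen U → IsOpen V → U.Nonempty → V.Nonempty →
    ∃ U' V' : Set X, IsOpen U' ∧ IsOpen V' ∧ U'.Nonempty ∧ V'.Nonempty ∧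
      U' ⊆ U ∧ V' ⊆ V ∧ (∀ j ≤ t, ∀ x ∈ closure U', ∀ y ∈ closure V', (x, y) ∈ R j) := by
  induction t with
  | zero =>
    intro U V hU hV hUne hVne
    obtain ⟨U', V', h1, h2, h3, h4, h5, h6, h7⟩ := shrink_one (hRo 0) (hRd 0) U V hU hV hUne hVne
    exact ⟨U', V', h1, h2, h3, h4, h5, h6, fun j hj => by
      interval_cases j
      exact h7⟩
  | succ t ih =>
    intro U V hU hV hUne hVne
    obtain ⟨U₁, V₁, h1, h2, h3, h4, h5, h6, h7⟩ := ih U V hU hV hUne hVne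
    obtain ⟨U₂, V₂, g1, g2, g3, g4, g5, g6, g7⟩ :=
      shrink_one (hRo (t + 1)) (hRd (t + 1)) U₁ V₁ h1 h2 h3 h4
    refine ⟨U₂, V₂, g1, g2, g3, g4, g5.trans h5, g6.trans h6, ?_⟩
    intro j hj x hx y hy
    rcases Nat.lt_or_ge j (t + 1) with hj' | hj'
    · exact h7 j (by omega) x (closure_mono g5 hx) y (closure_mono g6 hy)
    · have : j = t + 1 := by omega
      subst this
      exact g7 x hx y hy

end Myc
section Cells

/-- All boolean words of a given length. -/
def allWords : ℕ → List (List Bool)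
  | 0 => [[]]
  | L + 1 => (allWords L).flatMap fun w => [w ++ [true], w ++ [false]]

lemma mem_allWords : ∀ L (w : List Bool), w ∈ allWords L ↔ w.length = L := by
  intro L
  induction L with
  | zero =>
    intro w
    simp [allWords, List.length_eq_zero_iff]
  | succ L ih =>
    intro w
    simp only [allWords, List.mem_flatMap]
    constructor
    · rintro ⟨a, ha, hw⟩
      have ha' := (ih a).mp ha
      simp only [List.mem_cons, List.mem_singleton] at hw
      rcases hw with rfl | hw
      · simp [ha']
      · simp only [List.mem_singleton, List.not_mem_nil, or_false] at hw
        subst hw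
        simp [ha']
    · intro hw
      rcases List.eq_nil_or_concat w with rfl | ⟨w', b, rfl⟩
      · simp at hw
      · refine ⟨w', (ih w').mpr ?_, ?_⟩
        · simp at hw; omega
        · cases b <;> simp

/-- All cells of a given stage. -/
def allCells (t : ℕ) : List (ℕ × List Bool) :=
  (List.range (t + 1)).flatMap fun n => (allWords (t - n)).map fun w => (n, w)

lemma mem_allCells {t : ℕ} (c : ℕ × List Bool) :
    c ∈ allCells t ↔ c.1 + c.2.length = t := by
  simp only [allCells, List.mem_flatMap, List.mem_map, List.mem_range]
  constructor
  · rintro ⟨n, hn, w, hw, rfl⟩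
    have := (mem_allWords _ w).mp hw
    simp
    omega
  · intro h
    refine ⟨c.1, by omega, c.2, (mem_allWords _ c.2).mpr (by omega), rfl⟩

/-- All ordered pairs of cells of a given stage. -/
def cellPairs (t : ℕ) : List ((ℕ × List Bool) × (ℕ × List Bool)) :=
  (allCells t).flatMap fun c => (allCells t).map fun c' => (c, c')

lemma mem_cellPairs {t : ℕ} (c c' : ℕ × List Bool)
    (hc : c.1 + c.2.length = t) (hc' : c'.1 + c'.2.length = t) : (c, c') ∈ cellPairs t := by
  simp only [cellPairs, List.mem_flatMap, List.mem_map]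
  exact ⟨c, (mem_allCells c).mpr hc, c', (mem_allCells c').mpr hc', rfl⟩

end Cells

section Fold

variable {X : Type*} [MetricSpace X]
variable (R : ℕ → Set (X × X))

/-- Successively shrink an assignment of open sets over a list of pairs of cells, so that
the closures of each listed (distinct) pair are related by all of `R 0, …, R t`. -/
lemma fold_shrink (hRo : ∀ j, IsOpen (R j))
    (hRd : ∀ j, ∀ U V : Set X, IsOpen U → IsOpen V → U.Nonempty → V.Nonempty →
      ∃ x ∈ U, ∃ y ∈ V, (x, y) ∈ R j) (t : ℕ)
    (L : List ((ℕ × List Bool) × (ℕ × List Bool))) :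
    ∀ A : (ℕ × List Bool) → Set X, (∀ c, IsOpen (A c) ∧ (A c).Nonempty) →
    ∃ A' : (ℕ × List Bool) → Set X,
      (∀ c, IsOpen (A' c) ∧ (A' c).Nonempty ∧ A' c ⊆ A c) ∧
      (∀ pr ∈ L, pr.1 ≠ pr.2 →
        ∀ j ≤ t, ∀ x ∈ closure (A' pr.1), ∀ y ∈ closure (A' pr.2), (x, y) ∈ R j) := by
  classical
  induction L with
  | nil =>
    intro A hA
    exact ⟨A, fun c => ⟨(hA c).1, (hA c).2, subset_rfl⟩, by simp⟩
  | cons pr L ih =>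
    intro A hA
    obtain ⟨c, c'⟩ := pr
    by_cases hcc : c = c'
    · obtain ⟨A', hA', hL⟩ := ih A hA
      refine ⟨A', hA', ?_⟩
      intro pr hpr hne
      rcases List.mem_cons.mp hpr with rfl | hpr
      · exact absurd hcc hne
      · exact hL pr hpr hne
    · obtain ⟨U', V', h1, h2, h3, h4, h5, h6, h7⟩ :=
        shrink_star R hRo hRd t (A c) (A c') (hA c).1 (hA c').1 (hA c).2 (hA c').2
      set A₁ : (ℕ × List Bool) → Set X := Function.update (Function.update A c U') c' V'
        with hA₁
      have hA₁c : A₁ c = U' := by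
        rw [hA₁, Function.update_of_ne hcc, Function.update_self]
      have hA₁c' : A₁ c' = V' := by
        rw [hA₁, Function.update_self]
      have hA₁other : ∀ c'', c'' ≠ c → c'' ≠ c' → A₁ c'' = A c'' := by
        intro c'' h1' h2'
        rw [hA₁, Function.update_of_ne h2', Function.update_of_ne h1']
      have hA₁good : ∀ c'', IsOpen (A₁ c'') ∧ (A₁ c'').Nonempty := by
        intro c''
        by_cases e1 : c'' = c'
        · rw [e1, hA₁c']; exact ⟨h2, h4⟩
        · by_cases e2 : c'' = c
          · rw [e2, hA₁c]; exact ⟨h1, h3⟩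
          · rw [hA₁other c'' e2 e1]; exact hA c''
      have hA₁sub : ∀ c'', A₁ c'' ⊆ A c'' := by
        intro c''
        by_cases e1 : c'' = c'
        · rw [e1, hA₁c']; exact h6
        · by_cases e2 : c'' = c
          · rw [e2, hA₁c]; exact h5
          · rw [hA₁other c'' e2 e1]
      obtain ⟨A', hA', hL⟩ := ih A₁ hA₁good
      refine ⟨A', fun c'' => ⟨(hA' c'').1, (hA' c'').2.1, ((hA' c'').2.2).trans (hA₁sub c'')⟩, ?_⟩
      intro pr hpr hne
      rcases List.mem_cons.mp hpr with rfl | hpr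
      · intro j hj x hx y hy
        have hx' : x ∈ closure U' := by
          rw [← hA₁c]
          exact closure_mono (hA' c).2.2 hx
        have hy' : y ∈ closure V' := by
          rw [← hA₁c']
          exact closure_mono (hA' c').2.2 hy
        exact h7 j hj x hx' y hy'
      · exact hL pr hpr hne

end Fold
section Chain

variable {X : Type*} [MetricSpace X] [Nonempty X]

/-- The static invariant of the Cantor scheme at stage `t`. -/
def StaticInv (B : ℕ → Set X) (R : ℕ → Set (X × X)) (t : ℕ)
    (D : ℕ × List Bool → Set X) : Prop :=
  ∀ c : ℕ × List Bool, c.1 + c.2.length = t →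
    IsOpen (D c) ∧ (D c).Nonempty ∧
    (∀ x ∈ closure (D c), ∀ y ∈ closure (D c), dist x y ≤ (1 / 2 : ℝ) ^ c.2.length) ∧
    (c.2 = [] → closure (D c) ⊆ B c.1) ∧
    (∀ c' : ℕ × List Bool, c'.1 + c'.2.length = t → c ≠ c' → ∀ j ≤ t,
      ∀ x ∈ closure (D c), ∀ y ∈ closure (D c'), (x, y) ∈ R j)

lemma base_exists (B : ℕ → Set X) (R : ℕ → Set (X × X))
    (hBo : ∀ n, IsOpen (B n)) (hBne : ∀ n, (B n).Nonempty) :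
    ∃ D, StaticInv B R 0 D := by
  obtain ⟨V, hVo, hVne, hVcl, hVd⟩ :=
    small_ball_in (hBo 0) (hBne 0).some_mem (one_pos : (0:ℝ) < 1)
  refine ⟨fun _ => V, ?_⟩
  intro c hc
  have hc1 : c.1 = 0 := by omega
  have hc2 : c.2 = [] := List.length_eq_zero_iff.mp (by omega)
  refine ⟨hVo, hVne, ?_, ?_, ?_⟩
  · intro x hx y hy
    rw [hc2]
    simpa using hVd x hx y hy
  · intro _
    rw [hc1]
    exact hVcl
  · intro c' hc' hne
    exfalso
    apply hne
    have : c'.1 = 0 := by omega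
    have h2 : c'.2 = [] := List.length_eq_zero_iff.mp (by omega)
    ext : 1
    · rw [hc1, this]
    · rw [hc2, h2]

lemma step_exists (B : ℕ → Set X) (R : ℕ → Set (X × X))
    (hBo : ∀ n, IsOpen (B n)) (hBne : ∀ n, (B n).Nonempty)
    (hRo : ∀ j, IsOpen (R j))
    (hRd : ∀ j, ∀ U V : Set X, IsOpen U → IsOpen V → U.Nonempty → V.Nonempty →
      ∃ x ∈ U, ∃ y ∈ V, (x, y) ∈ R j)
    (t : ℕ) (D : ℕ × List Bool → Set X) (hD : StaticInv B R t D) :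
    ∃ D', StaticInv B R (t + 1) D' ∧
      ∀ c : ℕ × List Bool, c.1 + c.2.length = t + 1 →
        ∀ (w' : List Bool) (b : Bool), c.2 = w' ++ [b] → closure (D' c) ⊆ D (c.1, w') := by
  classical
  have hη : ∀ l : ℕ, (0:ℝ) < (1 / 2 : ℝ) ^ l := fun l => pow_pos (by norm_num) l
  have hinit : ∀ c : ℕ × List Bool, ∃ Vb : Set X, IsOpen Vb ∧ Vb.Nonempty ∧
      (c.1 + c.2.length = t + 1 →
        ((∀ x ∈ closure Vb, ∀ y ∈ closure Vb, dist x y ≤ (1 / 2 : ℝ) ^ c.2.length) ∧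
          (c.2 = [] → closure Vb ⊆ B c.1) ∧
          (∀ (w' : List Bool) (b : Bool), c.2 = w' ++ [b] → closure Vb ⊆ D (c.1, w')))) := by
    intro c
    by_cases hc : c.1 + c.2.length = t + 1
    · rcases List.eq_nil_or_concat c.2 with h2 | ⟨w', b, h2⟩
      · obtain ⟨V, hVo, hVne, hVcl, hVd⟩ :=
          small_ball_in (hBo c.1) (hBne c.1).some_mem (hη c.2.length)
        refine ⟨V, hVo, hVne, fun _ => ⟨hVd, fun _ => hVcl, ?_⟩⟩
        intro w' b hw'
        rw [h2] at hw'
        exact absurd hw'.symm (by simp)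
      · have hpar : (c.1 + w'.length) = t := by
          rw [h2] at hc
          simp at hc
          omega
        obtain ⟨hPo, hPne, -, -, -⟩ := hD (c.1, w') hpar
        obtain ⟨V, hVo, hVne, hVcl, hVd⟩ :=
          small_ball_in hPo hPne.some_mem (hη c.2.length)
        refine ⟨V, hVo, hVne, fun _ => ⟨hVd, ?_, ?_⟩⟩
        · intro h
          rw [h] at h2
          exact absurd h2 (by simp)
        · intro w'' b' hw''
          have : w'' = w' := by
            have := h2.symm.trans hw''
            have h3 := congrArg List.dropLast this
            simpa [List.dropLast_concat] using h3.symm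
          rw [this]
          exact hVcl
    · exact ⟨Set.univ, isOpen_univ, Set.univ_nonempty, fun h => absurd h hc⟩
  choose A₀ hA₀o hA₀ne hA₀spec using hinit
  obtain ⟨A', hA', hpairs⟩ := fold_shrink R hRo hRd (t + 1) (cellPairs (t + 1)) A₀
    (fun c => ⟨hA₀o c, hA₀ne c⟩)
  refine ⟨A', ?_, ?_⟩
  · intro c hc
    have hsub : closure (A' c) ⊆ closure (A₀ c) := closure_mono (hA' c).2.2
    refine ⟨(hA' c).1, (hA' c).2.1, ?_, ?_, ?_⟩
    · intro x hx y hy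
      exact (hA₀spec c hc).1 x (hsub hx) y (hsub hy)
    · intro h2
      exact fun x hx => (hA₀spec c hc).2.1 h2 (hsub hx)
    · intro c' hc' hne j hj x hx y hy
      exact hpairs (c, c') (mem_cellPairs c c' hc hc') (by simpa using hne) j hj x hx y hy
  · intro c hc w' b hw'
    have hsub : closure (A' c) ⊆ closure (A₀ c) := closure_mono (hA' c).2.2
    exact fun x hx => (hA₀spec c hc).2.2 w' b hw' (hsub hx)

/-- The full Cantor scheme, built by recursion on the stage. -/
noncomputable def chainPack (B : ℕ → Set X) (R : ℕ → Set (X × X))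
    (hBo : ∀ n, IsOpen (B n)) (hBne : ∀ n, (B n).Nonempty)
    (hRo : ∀ j, IsOpen (R j))
    (hRd : ∀ j, ∀ U V : Set X, IsOpen U → IsOpen V → U.Nonempty → V.Nonempty →
      ∃ x ∈ U, ∃ y ∈ V, (x, y) ∈ R j) :
    ∀ t : ℕ, {D : ℕ × List Bool → Set X // StaticInv B R t D}
  | 0 => ⟨(base_exists B R hBo hBne).choose, (base_exists B R hBo hBne).choose_spec⟩
  | (t + 1) =>
    ⟨(step_exists B R hBo hBne hRo hRd t (chainPack B R hBo hBne hRo hRd t).1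
        (chainPack B R hBo hBne hRo hRd t).2).choose,
      (step_exists B R hBo hBne hRo hRd t (chainPack B R hBo hBne hRo hRd t).1
        (chainPack B R hBo hBne hRo hRd t).2).choose_spec.1⟩

lemma chainPack_conn (B : ℕ → Set X) (R : ℕ → Set (X × X))
    (hBo : ∀ n, IsOpen (B n)) (hBne : ∀ n, (B n).Nonempty)
    (hRo : ∀ j, IsOpen (R j))
    (hRd : ∀ j, ∀ U V : Set X, IsOpen U → IsOpen V → U.Nonempty → V.Nonempty →
      ∃ x ∈ U, ∃ y ∈ V, (x, y) ∈ R j)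
    (t : ℕ) (c : ℕ × List Bool) (hc : c.1 + c.2.length = t + 1)
    (w' : List Bool) (b : Bool) (hw' : c.2 = w' ++ [b]) :
    closure ((chainPack B R hBo hBne hRo hRd (t + 1)).1 c) ⊆
      (chainPack B R hBo hBne hRo hRd t).1 (c.1, w') := by
  have := (step_exists B R hBo hBne hRo hRd t (chainPack B R hBo hBne hRo hRd t).1
    (chainPack B R hBo hBne hRo hRd t).2).choose_spec.2 c hc w' b hw'
  exact this

end Chain
section Scheme

variable {X : Type*} [MetricSpace X] [CompactSpace X] [Nonempty X]

lemma cantor_scheme (B : ℕ → Set X) (R : ℕ → Set (X × X))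
    (hBo : ∀ n, IsOpen (B n)) (hBne : ∀ n, (B n).Nonempty)
    (hRo : ∀ j, IsOpen (R j))
    (hRd : ∀ j, ∀ U V : Set X, IsOpen U → IsOpen V → U.Nonempty → V.Nonempty →
      ∃ x ∈ U, ∃ y ∈ V, (x, y) ∈ R j) :
    ∃ h : ℕ → (ℕ → Bool) → X, (∀ n, Continuous (h n)) ∧ (∀ n σ, h n σ ∈ B n) ∧
      (∀ n σ m τ, (n, σ) ≠ (m, τ) → ∀ j, (h n σ, h m τ) ∈ R j) := by
  classical
  set DD : ℕ → (ℕ × List Bool) → Set X :=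
    fun t => (chainPack B R hBo hBne hRo hRd t).1 with hDD
  have hInv : ∀ t, StaticInv B R t (DD t) := fun t => (chainPack B R hBo hBne hRo hRd t).2
  set wd : (ℕ → Bool) → ℕ → List Bool := fun σ L => (List.range L).map σ with hwd
  have hwdlen : ∀ σ L, (wd σ L).length = L := by intro σ L; simp [hwd]
  have hwdsucc : ∀ σ L, wd σ (L + 1) = wd σ L ++ [σ L] := by
    intro σ L; simp [hwd, List.range_succ]
  set KS : ℕ → (ℕ → Bool) → ℕ → Set X :=
    fun n σ L => closure (DD (n + L) (n, wd σ L)) with hKS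
  have hstage : ∀ n σ L, (n, wd σ L).1 + (n, wd σ L).2.length = n + L := by
    intro n σ L; simp [hwdlen]
  have hKSne : ∀ n σ L, (KS n σ L).Nonempty := by
    intro n σ L
    exact ((hInv (n + L) (n, wd σ L) (hstage n σ L)).2.1).closure
  have hKSclosed : ∀ n σ L, IsClosed (KS n σ L) := fun n σ L => isClosed_closure
  have hKSanti : ∀ n σ L, KS n σ (L + 1) ⊆ KS n σ L := by
    intro n σ L
    have hc : (n, wd σ (L + 1)).1 + (n, wd σ (L + 1)).2.length = (n + L) + 1 := by
      simp [hwdlen]; omega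
    have := chainPack_conn B R hBo hBne hRo hRd (n + L) (n, wd σ (L + 1)) hc
      (wd σ L) (σ L) (hwdsucc σ L)
    refine fun x hx => subset_closure (this ?_)
    have hidx : n + (L + 1) = (n + L) + 1 := by omega
    rw [hKS] at hx
    simp only at hx
    rw [hidx] at hx
    exact hx
  have hpt : ∀ n σ, ∃ x : X, ∀ L, x ∈ KS n σ L := by
    intro n σ
    have := IsCompact.nonempty_iInter_of_sequence_nonempty_isCompact_isClosed
      (KS n σ) (hKSanti n σ) (hKSne n σ) ((hKSclosed n σ 0).isCompact) (hKSclosed n σ)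
    obtain ⟨x, hx⟩ := this
    exact ⟨x, fun L => Set.mem_iInter.mp hx L⟩
  choose hmap hmem using hpt
  have hdiam : ∀ n σ L, ∀ x ∈ KS n σ L, ∀ y ∈ KS n σ L, dist x y ≤ (1 / 2 : ℝ) ^ L := by
    intro n σ L x hx y hy
    have := (hInv (n + L) (n, wd σ L) (hstage n σ L)).2.2.1 x hx y hy
    rwa [hwdlen] at this
  refine ⟨hmap, ?_, ?_, ?_⟩
  · -- continuity
    intro n
    rw [continuous_iff_continuousAt]
    intro σ
    rw [ContinuousAt, Metric.tendsto_nhds]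
    intro ε hε
    obtain ⟨L, hL⟩ := exists_pow_lt_of_lt_one hε (by norm_num : (1 / 2 : ℝ) < 1)
    set O : Set (ℕ → Bool) := {τ | ∀ i < L, τ i = σ i} with hO
    have hOopen : IsOpen O := by
      have : O = ⋂ i ∈ Finset.range L, (fun τ : ℕ → Bool => τ i) ⁻¹' {σ i} := by
        ext τ
        simp [hO, Finset.mem_range]
      rw [this]
      apply isOpen_biInter_finset
      intro i _
      exact (continuous_apply i).isOpen_preimage _ (isOpen_discrete _)
    have hOσ : σ ∈ O := fun i _ => rfl
    refine Filter.eventually_of_mem (hOopen.mem_nhds hOσ) ?_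
    intro τ hτ
    have hweq : wd τ L = wd σ L := by
      apply List.map_congr_left
      intro i hi
      exact hτ i (List.mem_range.mp hi)
    have h1 : hmap n τ ∈ KS n σ L := by
      have := hmem n τ L
      rw [hKS] at this ⊢
      simp only at this ⊢
      rwa [hweq] at this
    have h2 : hmap n σ ∈ KS n σ L := hmem n σ L
    calc dist (hmap n τ) (hmap n σ) ≤ (1 / 2 : ℝ) ^ L := hdiam n σ L _ h1 _ h2
      _ < ε := hL
  · -- placement
    intro n σ
    have h0 : hmap n σ ∈ KS n σ 0 := hmem n σ 0
    have hwd0 : wd σ 0 = [] := by simp [hwd]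
    have := (hInv (n + 0) (n, wd σ 0) (hstage n σ 0)).2.2.2.1 hwd0
    rw [hKS] at h0
    exact this h0
  · -- pair property
    intro n σ m τ hne j
    -- find a stage where the cells are distinct
    obtain ⟨T, hTn, hTm, hTj, hcells⟩ :
        ∃ T, n ≤ T ∧ m ≤ T ∧ j ≤ T ∧ (n, wd σ (T - n)) ≠ (m, wd τ (T - m)) := by
      by_cases hnm : n = m
      · subst hnm
        have hστ : σ ≠ τ := by
          intro h
          exact hne (by rw [h])
        obtain ⟨i₀, hi₀⟩ := Function.ne_iff.mp hστ
        refine ⟨n + i₀ + 1 + j, by omega, by omega, by omega, ?_⟩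
        intro hcell
        apply hi₀
        have hw := (Prod.mk.injEq _ _ _ _).mp hcell |>.2
        have hlt : i₀ < n + i₀ + 1 + j - n := by omega
        have h1 : ((List.range (n + i₀ + 1 + j - n)).map σ)[i₀]'(by simp [hlt]) =
            ((List.range (n + i₀ + 1 + j - n)).map τ)[i₀]'(by simp [hlt]) := by
          simp only [hwd] at hw
          simp_rw [hw]
        simpa [List.getElem_map, List.getElem_range] using h1
      · exact ⟨n + m + j, by omega, by omega, by omega, fun hcell =>
          hnm ((Prod.mk.injEq _ _ _ _).mp hcell).1⟩
    have hx : hmap n σ ∈ closure (DD T (n, wd σ (T - n))) := by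
      have := hmem n σ (T - n)
      rw [hKS] at this
      simp only at this
      rwa [Nat.add_sub_cancel' hTn] at this
    have hy : hmap m τ ∈ closure (DD T (m, wd τ (T - m))) := by
      have := hmem m τ (T - m)
      rw [hKS] at this
      simp only at this
      rwa [Nat.add_sub_cancel' hTm] at this
    have hstx : (n, wd σ (T - n)).1 + (n, wd σ (T - n)).2.length = T := by
      simp [hwdlen]; omega
    have hsty : (m, wd τ (T - m)).1 + (m, wd τ (T - m)).2.length = T := by
      simp [hwdlen]; omega
    exact (hInv T _ hstx).2.2.2.2 _ hsty hcells j hTj _ hx _ hy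

end Scheme
theorem multiTrans_dense_Mycielski_scrambled
    {X : Type*} [MetricSpace X] [CompactSpace X] [Nontrivial X]
    (f : X → X) (hf : Continuous f) (hmt : MultiTrans f) :
    ∃ δ : ℝ, 0 < δ ∧ ∃ C : Set X, Dense C ∧
      (∃ K : ℕ → Set X, (∀ n, IsCantorSet (K n)) ∧ C = ⋃ n, K n) ∧
      ∀ x ∈ C, ∀ y ∈ C, x ≠ y →
        δ < Filter.limsup (fun n => dist (f^[n] x) (f^[n] y)) Filter.atTop ∧
        Filter.liminf (fun n => dist (f^[n] x) (f^[n] y)) Filter.atTop = 0 := by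
  classical
  obtain ⟨p₀, q₀, hpq⟩ := exists_pair_ne X
  have hD0 : 0 < dist p₀ q₀ := dist_pos.mpr hpq
  set δ' : ℝ := dist p₀ q₀ / 8 with hδ'
  have hδ'0 : 0 < δ' := by rw [hδ']; linarith
  refine ⟨δ' / 2, by linarith, ?_⟩
  -- countable basis
  obtain ⟨bset, hbc, hbne, hbasis⟩ := TopologicalSpace.exists_countable_basis X
  have hbsetne : bset.Nonempty := by
    obtain ⟨v, hv, -, -⟩ := hbasis.exists_subset_of_mem_open (Set.mem_univ p₀) isOpen_univ
    exact ⟨v, hv⟩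
  obtain ⟨e, he⟩ := Set.Countable.exists_eq_range hbc hbsetne
  have hBo : ∀ n, IsOpen (e n) := fun n => hbasis.isOpen (by rw [he]; exact ⟨n, rfl⟩)
  have hBne : ∀ n, (e n).Nonempty := fun n => by
    rw [Set.nonempty_iff_ne_empty]
    intro h
    apply hbne
    rw [← h, he]
    exact ⟨n, rfl⟩
  -- the scrambling relations
  set Prox : ℕ → Set (X × X) := fun j =>
    {z : X × X | ∃ ν, j ≤ ν ∧ dist (f^[ν] z.1) (f^[ν] z.2) < 1 / (j + 1)} with hProx
  set Far : ℕ → Set (X × X) := fun j =>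
    {z : X × X | ∃ ν, j ≤ ν ∧ δ' < dist (f^[ν] z.1) (f^[ν] z.2)} with hFar
  set R : ℕ → Set (X × X) := fun j => Prox j ∩ Far j with hR
  have hcontdist : ∀ ν : ℕ, Continuous fun z : X × X => dist (f^[ν] z.1) (f^[ν] z.2) :=
    fun ν => ((hf.iterate ν).comp continuous_fst).dist ((hf.iterate ν).comp continuous_snd)
  have hProxo : ∀ j, IsOpen (Prox j) := by
    intro j
    have : Prox j = ⋃ ν, ⋃ (_ : j ≤ ν),
        {z : X × X | dist (f^[ν] z.1) (f^[ν] z.2) < 1 / (j + 1)} := by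
      ext z; simp [hProx]
    rw [this]
    exact isOpen_iUnion fun ν => isOpen_iUnion fun _ =>
      isOpen_lt (hcontdist ν) continuous_const
  have hFaro : ∀ j, IsOpen (Far j) := by
    intro j
    have : Far j = ⋃ ν, ⋃ (_ : j ≤ ν),
        {z : X × X | δ' < dist (f^[ν] z.1) (f^[ν] z.2)} := by
      ext z; simp [hFar]
    rw [this]
    exact isOpen_iUnion fun ν => isOpen_iUnion fun _ =>
      isOpen_lt continuous_const (hcontdist ν)
  have hRo : ∀ j, IsOpen (R j) := fun j => (hProxo j).inter (hFaro j)
  have hRd : ∀ j, ∀ U V : Set X, IsOpen U → IsOpen V → U.Nonempty → V.Nonempty →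
      ∃ x ∈ U, ∃ y ∈ V, (x, y) ∈ R j := by
    intro j U V hU hV hUne hVne
    obtain ⟨ν₁, hν₁, a, haU, b, hbV, hab⟩ := far_dense hf hmt hpq U V hU hV hUne hVne j
    have habFar : (a, b) ∈ Far j := ⟨ν₁, hν₁, hab⟩
    obtain ⟨P, Q, hPo, hQo, haP, hbQ, hPQ⟩ := isOpen_prod_iff.mp (hFaro j) a b habFar
    have hεj : (0:ℝ) < 1 / (j + 1) := by positivity
    obtain ⟨ν₂, hν₂, x, hx, y, hy, hxy⟩ := prox_dense hf hmt (U ∩ P) (V ∩ Q)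
      (hU.inter hPo) (hV.inter hQo) ⟨a, haU, haP⟩ ⟨b, hbV, hbQ⟩ (1 / (j + 1)) hεj j
    exact ⟨x, hx.1, y, hy.1, ⟨ν₂, hν₂, hxy⟩, hPQ ⟨hx.2, hy.2⟩⟩
  -- the Cantor scheme
  obtain ⟨h, hcont, hplace, hpair⟩ := cantor_scheme e R hBo hBne hRo hRd
  set K : ℕ → Set X := fun n => Set.range (h n) with hK
  have hfarpair : ∀ {n σ m τ}, (n, σ) ≠ (m, τ) → h n σ ≠ h m τ := by
    intro n σ m τ hne heq
    obtain ⟨ν, -, hd⟩ := (hpair n σ m τ hne 0).2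
    rw [heq] at hd
    simp at hd
    linarith
  refine ⟨⋃ n, K n, ?_, ⟨K, ?_, rfl⟩, ?_⟩
  · -- density
    rw [dense_iff_inter_open]
    intro O hOo hOne
    obtain ⟨x₀, hx₀⟩ := hOne
    obtain ⟨v, hv, hx₀v, hvO⟩ := hbasis.exists_subset_of_mem_open hx₀ hOo
    rw [he] at hv
    obtain ⟨n, rfl⟩ := hv
    refine ⟨h n (fun _ => false), hvO (hplace n _), Set.mem_iUnion.mpr ⟨n, ⟨_, rfl⟩⟩⟩
  · -- each K n is a Cantor set
    intro n
    have hinj : Function.Injective (h n) := by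
      intro σ τ hστ
      by_contra hne
      exact hfarpair (fun hp => hne (by
        have := (Prod.mk.injEq n σ n τ).mp hp
        exact this.2)) hστ
    have hcont' : Continuous ⇑(Equiv.ofInjective (h n) hinj) := by
      rw [continuous_induced_rng]
      have : Subtype.val ∘ ⇑(Equiv.ofInjective (h n) hinj) = h n := by
        funext σ
        simp [Equiv.ofInjective_apply]
      rw [this]
      exact hcont n
    exact ⟨hcont'.homeoOfEquivCompactToT2⟩
  · -- scrambledness
    intro x hx y hy hxy
    rw [Set.mem_iUnion] at hx hy
    obtain ⟨n, hx⟩ := hx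
    obtain ⟨m, hy⟩ := hy
    simp only [hK, Set.mem_range] at hx hy
    obtain ⟨σ, rfl⟩ := hx
    obtain ⟨τ, rfl⟩ := hy
    have hne : (n, σ) ≠ (m, τ) := by
      intro hp
      obtain ⟨h1, h2⟩ := (Prod.mk.injEq _ _ _ _).mp hp
      subst h1
      subst h2
      exact hxy rfl
    have hRall := hpair n σ m τ hne
    set u : ℕ → ℝ := fun ν => dist (f^[ν] (h n σ)) (f^[ν] (h m τ)) with hu
    obtain ⟨C₀, hC₀⟩ := Metric.isBounded_iff.mp (isCompact_univ (X := X)).isBounded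
    have hub : ∀ ν, u ν ≤ C₀ := fun ν => hC₀ (Set.mem_univ _) (Set.mem_univ _)
    have hBddAbove : Filter.IsBoundedUnder (· ≤ ·) Filter.atTop u :=
      Filter.isBoundedUnder_of ⟨C₀, hub⟩
    have hBddBelow : Filter.IsBoundedUnder (· ≥ ·) Filter.atTop u :=
      Filter.isBoundedUnder_of ⟨0, fun ν => dist_nonneg⟩
    constructor
    · -- limsup
      have hfreq : ∃ᶠ ν in Filter.atTop, δ' ≤ u ν := by
        rw [Filter.frequently_atTop]
        intro a
        obtain ⟨ν, hν, hd⟩ := (hRall a).2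
        exact ⟨ν, hν, le_of_lt hd⟩
      have hls := Filter.le_limsup_of_frequently_le hfreq hBddAbove
      have : δ' / 2 < δ' := by linarith
      exact lt_of_lt_of_le this hls
    · -- liminf
      apply le_antisymm
      · apply le_of_forall_pos_le_add
        intro ε hε
        obtain ⟨jε, hjε⟩ := exists_nat_one_div_lt hε
        have hfreq : ∃ᶠ ν in Filter.atTop, u ν ≤ 1 / ((jε : ℝ) + 1) := by
          rw [Filter.frequently_atTop]
          intro a
          obtain ⟨ν, hν, hd⟩ := (hRall (max a jε)).1
          refine ⟨ν, le_trans (le_max_left a jε) hν, ?_⟩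
          have hmono : (1 : ℝ) / ((max a jε : ℕ) + 1) ≤ 1 / ((jε : ℝ) + 1) := by
            apply one_div_le_one_div_of_le
            · positivity
            · have : (jε : ℝ) ≤ ((max a jε : ℕ) : ℝ) :=
                Nat.cast_le.mpr (le_max_right a jε)
              linarith
          exact le_trans (le_of_lt hd) hmono
        have hli := Filter.liminf_le_of_frequently_le hfreq hBddBelow
        have : (1 : ℝ) / ((jε : ℝ) + 1) < ε := hjε
        linarith
      · exact Filter.le_liminf_of_le hBddAbove.isCoboundedUnder_ge
          (Filter.Eventually.of_forall fun ν => dist_nonneg)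
end
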